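/- Let F be a bipartite graph with a vertex v such that F−v is a forest, with Δ = Δ(F−v) and t = 2(|V(F)|−1). Then there exists a constant c (one may take c = t) such that: for any graph G with vertex partition V(G) = U ⊔ W, if 2e(U) + e(U,W) > 3c|U| + c|W|, then G contains a copy of F−v in which the F-neighbors of v are all embedded into U. -/

import Mathlib

open Finset SimpleGraph

private lemma getLast_eq_of_eq {α : Type*} {l₁ l₂ : List α} (h : l₁ = l₂) (h₁ : l₁ ≠ []) :
    l₁.getLast h₁ = l₂.getLast (h ▸ h₁) := by subst h; rfl

lemma exists_leaf' {α : Type*} [DecidableEq α] (G : SimpleGraph α) (hG : G.IsAcyclic)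
    (s : Finset α) (hs : s.Nonempty) :
    ∃ x ∈ s, ∀ y₁ y₂, y₁ ∈ s → y₂ ∈ s → G.Adj x y₁ → G.Adj x y₂ → y₁ = y₂ := by
  by_contra hcon
  push_neg at hcon
  have key : ∀ n : ℕ, ∃ (a b : α) (w : G.Walk a b), w.IsPath ∧ (∀ v ∈ w.support, v ∈ s) ∧
      w.length = n := by
    intro n
    induction n with
    | zero =>
      obtain ⟨a, ha⟩ := hs
      exact ⟨a, a, Walk.nil, Walk.IsPath.nil, by simp [ha], rfl⟩
    | succ n ih =>
      obtain ⟨a, b, w, hw, hsub, hlen⟩ := ih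
      by_cases hex : ∃ c, c ∈ s ∧ G.Adj b c ∧ c ∉ w.support
      · obtain ⟨c, hcs, hadj, hcsup⟩ := hex
        refine ⟨a, c, w.concat hadj, ?_, ?_, by simp [Walk.length_concat, hlen]⟩
        · rw [← Walk.isPath_reverse_iff, Walk.reverse_concat, Walk.cons_isPath_iff]
          exact ⟨hw.reverse, by simpa [Walk.support_reverse] using hcsup⟩
        · intro v hv
          rw [Walk.support_concat, List.mem_append] at hv
          rcases hv with hv | hv
          · exact hsub v hv
          · simp only [List.mem_singleton] at hv; exact hv ▸ hcs
      · push_neg at hex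
        obtain ⟨y₁, y₂, hy₁, hy₂, ha₁, ha₂, hne⟩ := hcon b (hsub b w.end_mem_support)
        have hmem₁ : y₁ ∈ w.support := hex y₁ hy₁ ha₁
        have hmem₂ : y₂ ∈ w.support := hex y₂ hy₂ ha₂
        exfalso
        have key2 : ∀ y (hy : y ∈ w.support), G.Adj b y →
            w.support = (w.takeUntil y hy).support ++ [b] := by
          intro y hy ha
          have hyb : y ≠ b := fun h => G.irrefl (h ▸ ha)
          have hq : (w.dropUntil y hy).IsPath := hw.dropUntil hy
          have he : (Walk.cons ha.symm Walk.nil : G.Walk y b).IsPath := by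
            rw [Walk.cons_isPath_iff]
            exact ⟨Walk.IsPath.nil, by simpa using hyb⟩
          have hp := hG.path_unique ⟨_, hq⟩ ⟨_, he⟩
          have heq : w.dropUntil y hy = Walk.cons ha.symm Walk.nil := by
            exact congrArg Subtype.val hp
          have hspec := w.take_spec hy
          conv_lhs => rw [← hspec]
          rw [Walk.support_append, heq]
          simp
        have e1 := key2 y₁ hmem₁ ha₁
        have e2 := key2 y₂ hmem₂ ha₂
        have e3 : (w.takeUntil y₁ hmem₁).support = (w.takeUntil y₂ hmem₂).support :=
          List.append_cancel_right (e1.symm.trans e2)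
        have g1 := (w.takeUntil y₁ hmem₁).getLast_support
        have g2 := (w.takeUntil y₂ hmem₂).getLast_support
        apply hne
        rw [← g1, ← g2]
        exact getLast_eq_of_eq e3 _
  obtain ⟨a, b, w, hw, hsub, hlen⟩ := key s.card
  have hnodup := hw.support_nodup
  have hle : w.support.length ≤ s.card := by
    have hss : w.support.toFinset ⊆ s := fun v hv => hsub v (List.mem_toFinset.mp hv)
    calc w.support.length = w.support.toFinset.card :=
          (List.toFinset_card_of_nodup hnodup).symm
      _ ≤ s.card := Finset.card_le_card hss
  rw [Walk.length_support] at hle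
  omega

lemma embed_forest {p : ℕ} (F : SimpleGraph (Fin p)) (v₀ : Fin p)
    (hforest : (SimpleGraph.induce {u : Fin p | u ≠ v₀} F).IsAcyclic)
    {V : Type} [Fintype V] [DecidableEq V] (G : SimpleGraph V) [DecidableRel G.Adj]
    (X Y : Finset V) (hX : X.Nonempty)
    (hdX : ∀ z ∈ X, p ≤ (G.neighborFinset z ∩ Y).card + 1)
    (hdY : ∀ z ∈ Y, p ≤ (G.neighborFinset z ∩ X).card + 1)
    (box : Fin p → Finset V)
    (hbox : ∀ u w, u ≠ v₀ → w ≠ v₀ → F.Adj u w →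
      (box u = X ∧ box w = Y) ∨ (box u = Y ∧ box w = X))
    (hboxXY : ∀ u, u ≠ v₀ → box u = X ∨ box u = Y) :
    ∀ s : Finset (Fin p), v₀ ∉ s →
      ∃ f : Fin p → V, (∀ u ∈ s, f u ∈ box u) ∧ Set.InjOn f ↑s ∧
        ∀ u w, u ∈ s → w ∈ s → F.Adj u w → G.Adj (f u) (f w) := by
  classical
  intro s
  induction s using Finset.strongInduction with
  | _ s ih =>
    intro hv₀s
    rcases s.eq_empty_or_nonempty with rfl | hne
    · exact ⟨fun _ => hX.choose, by simp, by simp, by simp⟩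
    obtain ⟨x₀, hx₀⟩ := hne
    have hx₀v : x₀ ≠ v₀ := fun h => hv₀s (h ▸ hx₀)
    -- find a leaf of the forest restricted to s
    obtain ⟨xt, hxts, hleaf⟩ := exists_leaf' _ hforest (s.subtype fun u => u ≠ v₀)
      ⟨⟨x₀, hx₀v⟩, Finset.mem_subtype.mpr hx₀⟩
    obtain ⟨x, hxv⟩ := xt
    have hxs : x ∈ s := Finset.mem_subtype.mp hxts
    have hleaf' : ∀ y₁ y₂, y₁ ∈ s → y₂ ∈ s → F.Adj x y₁ → F.Adj x y₂ → y₁ = y₂ := by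
      intro y₁ y₂ h₁ h₂ a₁ a₂
      have n₁ : y₁ ≠ v₀ := fun h => hv₀s (h ▸ h₁)
      have n₂ : y₂ ≠ v₀ := fun h => hv₀s (h ▸ h₂)
      have := hleaf ⟨y₁, n₁⟩ ⟨y₂, n₂⟩ (Finset.mem_subtype.mpr h₁)
        (Finset.mem_subtype.mpr h₂) a₁ a₂
      exact congrArg Subtype.val this
    -- cardinality facts
    have hp2 : 2 ≤ p := by
      have hsubu : ({x, v₀} : Finset (Fin p)) ⊆ Finset.univ := Finset.subset_univ _
      have := Finset.card_le_card hsubu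
      rw [Finset.card_insert_of_notMem (by simpa using hxv), Finset.card_singleton] at this
      simpa using this
    have hYne : Y.Nonempty := by
      have := hdX _ hX.choose_spec
      have hYc : p ≤ Y.card + 1 :=
        le_trans this (by
          have := Finset.card_le_card (Finset.inter_subset_right
            (s₁ := G.neighborFinset hX.choose) (s₂ := Y))
          omega)
      exact Finset.card_pos.mp (by omega)
    have hXc : p ≤ X.card + 1 := by
      refine le_trans (hdY _ hYne.choose_spec) ?_
      have := Finset.card_le_card (Finset.inter_subset_right
        (s₁ := G.neighborFinset hYne.choose) (s₂ := X))
      omega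
    have hYc : p ≤ Y.card + 1 := by
      refine le_trans (hdX _ hX.choose_spec) ?_
      have := Finset.card_le_card (Finset.inter_subset_right
        (s₁ := G.neighborFinset hX.choose) (s₂ := Y))
      omega
    have hscard : s.card + 1 ≤ p := by
      have hsubu : s ⊆ Finset.univ.erase v₀ := fun a ha =>
        Finset.mem_erase.mpr ⟨fun h => hv₀s (h ▸ ha), Finset.mem_univ a⟩
      have h1 := Finset.card_le_card hsubu
      have h2 : (Finset.univ.erase v₀).card + 1 = (Finset.univ : Finset (Fin p)).card :=
        Finset.card_erase_add_one (Finset.mem_univ v₀)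
      have h3 : (Finset.univ : Finset (Fin p)).card = p := Finset.card_fin p
      omega
    set s' := s.erase x with hs'def
    have hs'card : s'.card + 1 = s.card := Finset.card_erase_add_one hxs
    obtain ⟨f, hfbox, hfinj, hfadj⟩ := ih s' (Finset.erase_ssubset hxs)
      (fun h => hv₀s (Finset.mem_of_mem_erase h))
    set D := s'.image f with hDdef
    have hD : D.card ≤ s'.card := Finset.card_image_le
    -- find the image for x
    by_cases hnbr : ∃ y ∈ s', F.Adj x y
    · obtain ⟨y, hys', hxy⟩ := hnbr
      have hys : y ∈ s := Finset.mem_of_mem_erase hys'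
      have hyv : y ≠ v₀ := fun h => hv₀s (h ▸ hys)
      have hyx : y ≠ x := (Finset.mem_erase.mp hys').1
      have hplace : ∃ cand, cand ∈ box x ∧ cand ∉ D ∧ G.Adj (f y) cand := by
        rcases hbox x y hxv hyv hxy with ⟨hbx, hby⟩ | ⟨hbx, hby⟩
        · have hzY : f y ∈ Y := hby ▸ hfbox y hys'
          have hA := hdY _ hzY
          have hns : ¬ (G.neighborFinset (f y) ∩ X) ⊆ D := fun hsub => by
            have := Finset.card_le_card hsub
            omega
          obtain ⟨cand, hc1, hc2⟩ := Finset.not_subset.mp hns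
          obtain ⟨hcn, hcX⟩ := Finset.mem_inter.mp hc1
          exact ⟨cand, hbx ▸ hcX, hc2, (SimpleGraph.mem_neighborFinset _ _ _).mp hcn⟩
        · have hzX : f y ∈ X := hby ▸ hfbox y hys'
          have hA := hdX _ hzX
          have hns : ¬ (G.neighborFinset (f y) ∩ Y) ⊆ D := fun hsub => by
            have := Finset.card_le_card hsub
            omega
          obtain ⟨cand, hc1, hc2⟩ := Finset.not_subset.mp hns
          obtain ⟨hcn, hcY⟩ := Finset.mem_inter.mp hc1
          exact ⟨cand, hbx ▸ hcY, hc2, (SimpleGraph.mem_neighborFinset _ _ _).mp hcn⟩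
      obtain ⟨cand, hcbox, hcD, hcadj⟩ := hplace
      refine ⟨Function.update f x cand, ?_, ?_, ?_⟩
      · intro u hus
        by_cases hux : u = x
        · rw [hux, Function.update_self]; exact hux ▸ hcbox
        · rw [Function.update_of_ne hux]
          exact hfbox u (Finset.mem_erase.mpr ⟨hux, hus⟩)
      · intro a ha b hb hab
        simp only [Finset.mem_coe] at ha hb
        by_cases hax : a = x <;> by_cases hbx2 : b = x
        · rw [hax, hbx2]
        · exfalso
          rw [hax, Function.update_self, Function.update_of_ne hbx2] at hab
          exact hcD (by rw [hab]; exact Finset.mem_image_of_mem f (Finset.mem_erase.mpr ⟨hbx2, hb⟩))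
        · exfalso
          rw [hbx2, Function.update_self, Function.update_of_ne hax] at hab
          exact hcD (by rw [← hab]; exact Finset.mem_image_of_mem f (Finset.mem_erase.mpr ⟨hax, ha⟩))
        · rw [Function.update_of_ne hax, Function.update_of_ne hbx2] at hab
          exact hfinj (Finset.mem_coe.mpr (Finset.mem_erase.mpr ⟨hax, ha⟩))
            (Finset.mem_coe.mpr (Finset.mem_erase.mpr ⟨hbx2, hb⟩)) hab
      · intro u w hu hw hadj
        by_cases hux : u = x <;> by_cases hwx : w = x
        · rw [hux, hwx] at hadj
          exact absurd hadj (F.loopless.irrefl x)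
        · rw [hux] at hadj ⊢
          have hwy : w = y := hleaf' w y hw hys hadj hxy
          rw [hwy, Function.update_self, Function.update_of_ne hyx]
          exact hcadj.symm
        · rw [hwx] at hadj ⊢
          have huy : u = y := hleaf' u y hu hys hadj.symm hxy
          rw [huy, Function.update_self, Function.update_of_ne hyx]
          exact hcadj
        · rw [Function.update_of_ne hux, Function.update_of_ne hwx]
          exact hfadj u w (Finset.mem_erase.mpr ⟨hux, hu⟩)
            (Finset.mem_erase.mpr ⟨hwx, hw⟩) hadj
    · push_neg at hnbr
      have hplace : ∃ cand, cand ∈ box x ∧ cand ∉ D := by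
        rcases hboxXY x hxv with hbx | hbx
        · have hns : ¬ X ⊆ D := fun hsub => by
            have := Finset.card_le_card hsub; omega
          obtain ⟨cand, hc1, hc2⟩ := Finset.not_subset.mp hns
          exact ⟨cand, hbx ▸ hc1, hc2⟩
        · have hns : ¬ Y ⊆ D := fun hsub => by
            have := Finset.card_le_card hsub; omega
          obtain ⟨cand, hc1, hc2⟩ := Finset.not_subset.mp hns
          exact ⟨cand, hbx ▸ hc1, hc2⟩
      obtain ⟨cand, hcbox, hcD⟩ := hplace
      refine ⟨Function.update f x cand, ?_, ?_, ?_⟩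
      · intro u hus
        by_cases hux : u = x
        · rw [hux, Function.update_self]; exact hux ▸ hcbox
        · rw [Function.update_of_ne hux]
          exact hfbox u (Finset.mem_erase.mpr ⟨hux, hus⟩)
      · intro a ha b hb hab
        simp only [Finset.mem_coe] at ha hb
        by_cases hax : a = x <;> by_cases hbx2 : b = x
        · rw [hax, hbx2]
        · exfalso
          rw [hax, Function.update_self, Function.update_of_ne hbx2] at hab
          exact hcD (by rw [hab]; exact Finset.mem_image_of_mem f (Finset.mem_erase.mpr ⟨hbx2, hb⟩))
        · exfalso
          rw [hbx2, Function.update_self, Function.update_of_ne hax] at hab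
          exact hcD (by rw [← hab]; exact Finset.mem_image_of_mem f (Finset.mem_erase.mpr ⟨hax, ha⟩))
        · rw [Function.update_of_ne hax, Function.update_of_ne hbx2] at hab
          exact hfinj (Finset.mem_coe.mpr (Finset.mem_erase.mpr ⟨hax, ha⟩))
            (Finset.mem_coe.mpr (Finset.mem_erase.mpr ⟨hbx2, hb⟩)) hab
      · intro u w hu hw hadj
        by_cases hux : u = x <;> by_cases hwx : w = x
        · rw [hux, hwx] at hadj
          exact absurd hadj (F.loopless.irrefl x)
        · rw [hux] at hadj
          exact absurd hadj (fun hc => hnbr w (Finset.mem_erase.mpr ⟨hwx, hw⟩) hc)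
        · rw [hwx] at hadj
          exact absurd hadj.symm (fun hc => hnbr u (Finset.mem_erase.mpr ⟨hux, hu⟩) hc)
        · rw [Function.update_of_ne hux, Function.update_of_ne hwx]
          exact hfadj u w (Finset.mem_erase.mpr ⟨hux, hu⟩)
            (Finset.mem_erase.mpr ⟨hwx, hw⟩) hadj

open Finset SimpleGraph

lemma exists_mindeg {V : Type} [Fintype V] [DecidableEq V] (G : SimpleGraph V)
    [DecidableRel G.Adj] (k : ℕ) :
    ∀ s : Finset V, 2 * k * s.card < ∑ x ∈ s, (G.neighborFinset x ∩ s).card →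
    ∃ T, T ⊆ s ∧ T.Nonempty ∧ ∀ x ∈ T, k + 1 ≤ (G.neighborFinset x ∩ T).card := by
  intro s
  induction s using Finset.strongInduction with
  | _ s ih =>
    intro h
    by_cases hall : ∀ x ∈ s, k + 1 ≤ (G.neighborFinset x ∩ s).card
    · refine ⟨s, Finset.Subset.refl s, ?_, hall⟩
      rcases s.eq_empty_or_nonempty with rfl | h'
      · simp at h
      · exact h'
    · push_neg at hall
      obtain ⟨x, hxs, hxdeg⟩ := hall
      set s' := s.erase x with hs'
      have hsplit : ∀ y ∈ s', (G.neighborFinset y ∩ s).card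
          = (G.neighborFinset y ∩ s').card + (if G.Adj y x then 1 else 0) := by
        intro y hy
        have hdecomp : G.neighborFinset y ∩ s
            = (G.neighborFinset y ∩ s') ∪ (G.neighborFinset y ∩ {x}) := by
          rw [← Finset.inter_union_distrib_left]
          congr 1
          rw [Finset.union_comm, ← Finset.insert_eq, Finset.insert_erase hxs]
        have hdisj : Disjoint (G.neighborFinset y ∩ s') (G.neighborFinset y ∩ {x}) := by
          rw [Finset.disjoint_left]
          intro a ha1 ha2
          have : a = x := by simpa using (Finset.mem_inter.mp ha2).2
          have ha1' := (Finset.mem_inter.mp ha1).2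
          rw [this] at ha1'
          exact Finset.notMem_erase x s ha1'
        rw [hdecomp, Finset.card_union_of_disjoint hdisj]
        congr 1
        split_ifs with hadj
        · rw [Finset.inter_singleton_of_mem (by rwa [SimpleGraph.mem_neighborFinset])]
          simp
        · rw [Finset.inter_singleton_of_notMem (by rwa [SimpleGraph.mem_neighborFinset])]
          simp
      have hsum : ∑ y ∈ s, (G.neighborFinset y ∩ s).card
          = (G.neighborFinset x ∩ s).card + ((∑ y ∈ s', (G.neighborFinset y ∩ s').card)
            + (s'.filter (fun y => G.Adj y x)).card) := by
        rw [← Finset.add_sum_erase _ _ hxs]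
        congr 1
        rw [Finset.sum_congr rfl hsplit, Finset.sum_add_distrib]
        congr 1
        rw [Finset.card_filter]
      have hfil : (s'.filter (fun y => G.Adj y x)).card ≤ k := by
        have hsub2 : s'.filter (fun y => G.Adj y x) ⊆ G.neighborFinset x ∩ s := by
          intro y hy
          obtain ⟨hy1, hy2⟩ := Finset.mem_filter.mp hy
          exact Finset.mem_inter.mpr ⟨(SimpleGraph.mem_neighborFinset _ _ _).mpr hy2.symm,
            Finset.mem_of_mem_erase hy1⟩
        have := Finset.card_le_card hsub2
        omega
      have hxk : (G.neighborFinset x ∩ s).card ≤ k := by omega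
      have hs'card : s'.card + 1 = s.card := Finset.card_erase_add_one hxs
      have hrec : 2 * k * s'.card < ∑ y ∈ s', (G.neighborFinset y ∩ s').card := by
        have e1 : 2 * k * s.card = 2 * k * s'.card + 2 * k := by rw [← hs'card]; ring
        rw [e1, hsum] at h
        omega
      obtain ⟨T, hT1, hT2, hT3⟩ := ih s' (Finset.erase_ssubset hxs) hrec
      exact ⟨T, hT1.trans (Finset.erase_subset x s), hT2, hT3⟩

open Finset SimpleGraph

section helpers
variable {V : Type} [Fintype V] [DecidableEq V]

lemma sum_inter_comm (G : SimpleGraph V) [DecidableRel G.Adj] (A B : Finset V) :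
    ∑ x ∈ A, (G.neighborFinset x ∩ B).card = ∑ y ∈ B, (G.neighborFinset y ∩ A).card := by
  have h1 : ∀ (C : Finset V) (x : V), G.neighborFinset x ∩ C
      = C.filter (fun y => G.Adj x y) := by
    intro C x
    ext y
    simp [SimpleGraph.mem_neighborFinset, and_comm]
  simp_rw [h1, Finset.card_filter]
  rw [Finset.sum_comm]
  refine Finset.sum_congr rfl fun y _ => Finset.sum_congr rfl fun x _ => ?_
  simp_rw [SimpleGraph.adj_comm]

end helpers
/-- The forest lemma: for a bipartite graph F with a vertex v₀ such that F−v₀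
is a forest, there is a constant c (one may take c = 2(|V(F)|−1)) such that any
graph G with vertex partition U ⊔ W satisfying 2e(U) + e(U,W) > 3c|U| + c|W|
(equivalently Σ_{u∈U} d(u) > 3c|U| + c|W|) contains a copy of F−v₀ in which
the F-neighbors of v₀ all embed into U. -/
theorem stmt_12 (p : ℕ) (F : SimpleGraph (Fin p)) (v₀ : Fin p)
    (hbip : F.Colorable 2)
    (hforest : (SimpleGraph.induce {u : Fin p | u ≠ v₀} F).IsAcyclic) :
    ∃ c : ℝ, c = 2 * ((p : ℝ) - 1) ∧
      ∀ (V : Type) [Fintype V] [DecidableEq V] (G : SimpleGraph V)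
        [DecidableRel G.Adj] (U W : Finset V),
        Disjoint U W → U ∪ W = Finset.univ →
        3 * c * (U.card : ℝ) + c * (W.card : ℝ) < ∑ u ∈ U, (G.degree u : ℝ) →
        ∃ f : Fin p → V, Set.InjOn f {u | u ≠ v₀} ∧
          (∀ u w, u ≠ v₀ → w ≠ v₀ → F.Adj u w → G.Adj (f u) (f w)) ∧
          (∀ u, F.Adj v₀ u → f u ∈ U) := by
  classical
  refine ⟨2 * ((p : ℝ) - 1), rfl, ?_⟩
  intro V _ _ G _ U W hdisj huniv hsum
  rcases Nat.lt_or_ge p 2 with hp | hp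
  · interval_cases p
    · refine ⟨fun u => u.elim0, ?_, ?_, ?_⟩
      · intro a _ b _ _; exact a.elim0
      · intro u; exact u.elim0
      · intro u; exact u.elim0
    · -- p = 1
      have hU : U.Nonempty := by
        rcases U.eq_empty_or_nonempty with rfl | h
        · exfalso; norm_num at hsum
        · exact h
      obtain ⟨u₀, hu₀⟩ := hU
      refine ⟨fun _ => u₀, ?_, ?_, ?_⟩
      · intro a _ b _ _; exact Subsingleton.elim a b
      · intro u w hu _ _; exact absurd (Subsingleton.elim u v₀) hu
      · intro u hadj; exact absurd (Subsingleton.elim v₀ u) hadj.ne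
  · -- p ≥ 2
    set t := 2 * (p - 1) with htdef
    have hc : (2 : ℝ) * ((p : ℝ) - 1) = (t : ℝ) := by
      rw [htdef]
      push_cast [Nat.cast_sub (by omega : 1 ≤ p)]
      ring
    have hdeg : ∀ u ∈ U, G.degree u
        = (G.neighborFinset u ∩ U).card + (G.neighborFinset u ∩ W).card := by
      intro u _
      have hdisj2 : Disjoint (G.neighborFinset u ∩ U) (G.neighborFinset u ∩ W) := by
        rw [Finset.disjoint_left]
        intro a ha1 ha2
        exact Finset.disjoint_left.mp hdisj (Finset.mem_inter.mp ha1).2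
          (Finset.mem_inter.mp ha2).2
      rw [← Finset.card_union_of_disjoint hdisj2, ← Finset.inter_union_distrib_left,
        huniv, Finset.inter_univ]
      rfl
    set SU := ∑ u ∈ U, (G.neighborFinset u ∩ U).card with hSUdef
    set SW := ∑ u ∈ U, (G.neighborFinset u ∩ W).card with hSWdef
    have hNat : 3 * t * U.card + t * W.card < SU + SW := by
      have h1 : (∑ u ∈ U, (G.degree u : ℝ)) = ((SU + SW : ℕ) : ℝ) := by
        rw [hSUdef, hSWdef]
        push_cast
        rw [← Finset.sum_add_distrib]
        refine Finset.sum_congr rfl fun u hu => ?_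
        rw [hdeg u hu]; push_cast; ring
      rw [h1, hc] at hsum
      exact_mod_cast hsum
    suffices hfind : ∃ X Y : Finset V, X.Nonempty ∧ X ⊆ U ∧
        (∀ z ∈ X, p ≤ (G.neighborFinset z ∩ Y).card + 1) ∧
        (∀ z ∈ Y, p ≤ (G.neighborFinset z ∩ X).card + 1) by
      obtain ⟨X, Y, hXne, hXU, hdX, hdY⟩ := hfind
      set C : F.Coloring (Fin 2) := hbip.some with hCdef
      have hfin2 : ∀ a b c : Fin 2, b ≠ a → c ≠ a → b = c := by decide
      set box : Fin p → Finset V := fun u => if C u = C v₀ then Y else X with hboxdef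
      have hbox : ∀ u w, u ≠ v₀ → w ≠ v₀ → F.Adj u w →
          (box u = X ∧ box w = Y) ∨ (box u = Y ∧ box w = X) := by
        intro u w _ _ hadj
        have hcc := C.valid hadj
        by_cases h1 : C u = C v₀
        · right
          have h2 : C w ≠ C v₀ := fun h2 => hcc (h1.trans h2.symm)
          constructor
          · simp only [hboxdef, if_pos h1]
          · simp only [hboxdef, if_neg h2]
        · left
          have h2 : C w = C v₀ := by
            by_contra h2
            exact hcc (hfin2 (C v₀) (C u) (C w) h1 h2)
          constructor
          · simp only [hboxdef, if_neg h1]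
          · simp only [hboxdef, if_pos h2]
      have hboxXY : ∀ u, u ≠ v₀ → box u = X ∨ box u = Y := by
        intro u _
        by_cases h1 : C u = C v₀
        · right; simp only [hboxdef, if_pos h1]
        · left; simp only [hboxdef, if_neg h1]
      obtain ⟨f, hfbox, hfinj, hfadj⟩ := embed_forest F v₀ hforest G X Y hXne hdX hdY
        box hbox hboxXY (Finset.univ.erase v₀) (Finset.notMem_erase v₀ _)
      refine ⟨f, ?_, ?_, ?_⟩
      · have hset : {u : Fin p | u ≠ v₀} = ↑(Finset.univ.erase v₀) := by
          ext u; simp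
        rw [hset]; exact hfinj
      · intro u w hu hw hadj
        exact hfadj u w (Finset.mem_erase.mpr ⟨hu, Finset.mem_univ u⟩)
          (Finset.mem_erase.mpr ⟨hw, Finset.mem_univ w⟩) hadj
      · intro u hadj
        have hu : u ≠ v₀ := hadj.ne'
        have hmem := hfbox u (Finset.mem_erase.mpr ⟨hu, Finset.mem_univ u⟩)
        have hcu : C u ≠ C v₀ := (C.valid hadj).symm
        have hbu : box u = X := by simp only [hboxdef, if_neg hcu]
        rw [hbu] at hmem
        exact hXU hmem
    rcases Nat.lt_or_ge (2 * (t - 2) * U.card) SU with hcase | hcase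
    · -- Case 1: many edges inside U
      let GU : SimpleGraph V :=
        { Adj := fun a b => G.Adj a b ∧ a ∈ U ∧ b ∈ U,
          symm := ⟨fun a b h => ⟨h.1.symm, h.2.2, h.2.1⟩⟩,
          loopless := ⟨fun a h => G.loopless.irrefl a h.1⟩ }
      letI : DecidableRel GU.Adj :=
        fun a b => inferInstanceAs (Decidable (G.Adj a b ∧ a ∈ U ∧ b ∈ U))
      have hGUn : ∀ x ∈ U, GU.neighborFinset x = G.neighborFinset x ∩ U := by
        intro x hx
        ext y
        simp only [SimpleGraph.mem_neighborFinset, Finset.mem_inter]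
        show (G.Adj x y ∧ x ∈ U ∧ y ∈ U) ↔ _
        tauto
      have hsum2 : ∑ x ∈ U, (GU.neighborFinset x ∩ U).card = SU := by
        rw [hSUdef]
        refine Finset.sum_congr rfl fun x hx => ?_
        rw [hGUn x hx, Finset.inter_assoc, Finset.inter_self]
      obtain ⟨T, hTU, hTne, hTdeg⟩ := exists_mindeg GU (t - 2) U (by rw [hsum2]; exact hcase)
      refine ⟨T, T, hTne, hTU, ?_, ?_⟩
      all_goals
        intro z hz
        have h1 := hTdeg z hz
        have h2 : GU.neighborFinset z ∩ T ⊆ G.neighborFinset z ∩ T := by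
          intro a ha
          obtain ⟨ha1, ha2⟩ := Finset.mem_inter.mp ha
          refine Finset.mem_inter.mpr ⟨?_, ha2⟩
          rw [SimpleGraph.mem_neighborFinset] at ha1 ⊢
          exact ha1.1
        have h3 := Finset.card_le_card h2
        omega
    · -- Case 2: many edges between U and W
      have hkey : t * U.card + t * W.card < SW := by
        have hmul : SU ≤ 2 * t * U.card :=
          le_trans hcase (Nat.mul_le_mul_right _ (by omega))
        have hch : t * U.card + t * W.card + 2 * t * U.card < SW + 2 * t * U.card := by
          calc t * U.card + t * W.card + 2 * t * U.card
              = 3 * t * U.card + t * W.card := by ring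
            _ < SU + SW := hNat
            _ ≤ 2 * t * U.card + SW := Nat.add_le_add_right hmul SW
            _ = SW + 2 * t * U.card := Nat.add_comm _ _
        exact Nat.lt_of_add_lt_add_right hch
      let GB : SimpleGraph V :=
        { Adj := fun a b => G.Adj a b ∧ ((a ∈ U ∧ b ∈ W) ∨ (a ∈ W ∧ b ∈ U)),
          symm := ⟨fun a b h => ⟨h.1.symm,
            h.2.elim (fun hh => Or.inr ⟨hh.2, hh.1⟩) (fun hh => Or.inl ⟨hh.2, hh.1⟩)⟩⟩,
          loopless := ⟨fun a h => G.loopless.irrefl a h.1⟩ }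
      letI : DecidableRel GB.Adj :=
        fun a b => inferInstanceAs (Decidable (G.Adj a b ∧ ((a ∈ U ∧ b ∈ W) ∨ (a ∈ W ∧ b ∈ U))))
      have hUW : ∀ a, a ∈ U → a ∉ W := fun a ha => Finset.disjoint_left.mp hdisj ha
      have hGBU : ∀ x ∈ U, GB.neighborFinset x = G.neighborFinset x ∩ W := by
        intro x hx
        ext y
        simp only [SimpleGraph.mem_neighborFinset, Finset.mem_inter]
        show (G.Adj x y ∧ ((x ∈ U ∧ y ∈ W) ∨ (x ∈ W ∧ y ∈ U))) ↔ _
        have := hUW x hx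
        tauto
      have hGBW : ∀ x ∈ W, GB.neighborFinset x = G.neighborFinset x ∩ U := by
        intro x hx
        have hxU : x ∉ U := fun hxu => hUW x hxu hx
        ext y
        simp only [SimpleGraph.mem_neighborFinset, Finset.mem_inter]
        show (G.Adj x y ∧ ((x ∈ U ∧ y ∈ W) ∨ (x ∈ W ∧ y ∈ U))) ↔ _
        tauto
      have hsum3 : ∑ x ∈ Finset.univ, (GB.neighborFinset x ∩ Finset.univ).card = 2 * SW := by
        simp_rw [Finset.inter_univ]
        rw [← huniv, Finset.sum_union hdisj]
        have e1 : ∑ x ∈ U, (GB.neighborFinset x).card = SW :=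
          Finset.sum_congr rfl (fun x hx => by rw [hGBU x hx])
        have e2 : ∑ x ∈ W, (GB.neighborFinset x).card = SW := by
          rw [Finset.sum_congr rfl (fun x hx => by rw [hGBW x hx])]
          rw [hSWdef]
          exact sum_inter_comm G W U
        rw [e1, e2]; ring
      have hcard_univ : (Finset.univ : Finset V).card = U.card + W.card := by
        rw [← huniv, Finset.card_union_of_disjoint hdisj]
      obtain ⟨T, _, hTne, hTdeg⟩ := exists_mindeg GB t Finset.univ (by
        rw [hsum3, hcard_univ]
        have h5 : t * (U.card + W.card) < SW := by rw [Nat.mul_add]; exact hkey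
        calc 2 * t * (U.card + W.card) = 2 * (t * (U.card + W.card)) := by ring
          _ < 2 * SW := by omega)
      refine ⟨T ∩ U, T ∩ W, ?_, Finset.inter_subset_right, ?_, ?_⟩
      · obtain ⟨x₁, hx₁⟩ := hTne
        have hx₁uw : x₁ ∈ U ∪ W := by rw [huniv]; exact Finset.mem_univ x₁
        rcases Finset.mem_union.mp hx₁uw with h | h
        · exact ⟨x₁, Finset.mem_inter.mpr ⟨hx₁, h⟩⟩
        · have h1 := hTdeg x₁ hx₁
          have hpos : (GB.neighborFinset x₁ ∩ T).Nonempty := Finset.card_pos.mp (by omega)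
          obtain ⟨y₁, hy₁⟩ := hpos
          obtain ⟨hy1, hy2⟩ := Finset.mem_inter.mp hy₁
          rw [hGBW x₁ h] at hy1
          exact ⟨y₁, Finset.mem_inter.mpr ⟨hy2, (Finset.mem_inter.mp hy1).2⟩⟩
      · intro z hz
        obtain ⟨hzT, hzU⟩ := Finset.mem_inter.mp hz
        have h1 := hTdeg z hzT
        have heq : GB.neighborFinset z ∩ T = G.neighborFinset z ∩ (T ∩ W) := by
          rw [hGBU z hzU, Finset.inter_assoc, Finset.inter_comm W T]
        rw [heq] at h1
        omega
      · intro z hz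
        obtain ⟨hzT, hzW⟩ := Finset.mem_inter.mp hz
        have h1 := hTdeg z hzT
        have heq : GB.neighborFinset z ∩ T = G.neighborFinset z ∩ (T ∩ U) := by
          rw [hGBW z hzW, Finset.inter_assoc, Finset.inter_comm U T]
        rw [heq] at h1
        omega
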